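/- arXiv:2111.00226 — 2 statements merged into one kernel-verified Lean document; each statement's English description precedes it below -/
import Mathlib

section
/- Let f : ℤ₂³ → ℤ be the weight function with f(001) = 4, f(011) = 8, f(101) = 3, and f(y) = 0 for all other y, and let A u v = f(u + v) be the adjacency matrix of the weighted cubelike graph Cay(ℤ₂³, f). Then perfect state transfer occurs at time π/2 between vertices 000 and 101: the (101, 000) entry of exp(-(i π/2)·A) has absolute value 1. -/
open Matrix

noncomputable section PSTAux

variable {n : Type*} [Fintype n] [DecidableEq n]

/-- Ring hom from ℂ × ℂ determined by an involution `P`. -/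
def involHom (P : Matrix n n ℂ) (hP : P * P = 1) : ℂ × ℂ →+* Matrix n n ℂ :=
  RingHom.mk'
    { toFun := fun p => ((p.1 + p.2) / 2) • (1 : Matrix n n ℂ) + ((p.1 - p.2) / 2) • P
      map_one' := by norm_num
      map_mul' := by
        rintro ⟨a, b⟩ ⟨c, d⟩
        simp only [Prod.fst_mul, Prod.snd_mul, add_mul, mul_add, smul_mul_assoc,
          mul_smul_comm, one_mul, mul_one, hP, smul_smul]
        module }
    (by
      rintro ⟨a, b⟩ ⟨c, d⟩
      simp only [MonoidHom.coe_mk, OneHom.coe_mk, Prod.fst_add, Prod.snd_add]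
      module)

lemma exp_smul_involution (P : Matrix n n ℂ) (hP : P * P = 1) (c : ℂ) :
    NormedSpace.exp (c • P) = Complex.cosh c • (1 : Matrix n n ℂ) + Complex.sinh c • P := by
  letI : SeminormedRing (Matrix n n ℂ) := Matrix.linftyOpSemiNormedRing
  letI : NormedRing (Matrix n n ℂ) := Matrix.linftyOpNormedRing
  letI : NormedAlgebra ℂ (Matrix n n ℂ) := Matrix.linftyOpNormedAlgebra
  have hcont : Continuous (involHom P hP) := by
    show Continuous fun p : ℂ × ℂ =>
      ((p.1 + p.2) / 2) • (1 : Matrix n n ℂ) + ((p.1 - p.2) / 2) • P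
    fun_prop
  have h1 : c • P = involHom P hP (c, -c) := by
    show c • P = ((c + -c) / 2) • (1 : Matrix n n ℂ) + ((c - -c) / 2) • P
    simp only [add_neg_cancel, zero_div, zero_smul, zero_add, sub_neg_eq_add]
    rw [show (c + c) / 2 = c by ring]
  rw [h1]
  refine (NormedSpace.map_exp (involHom P hP) hcont (c, -c)).symm.trans ?_
  have h2 : NormedSpace.exp ((c, -c) : ℂ × ℂ) = (Complex.exp c, Complex.exp (-c)) := by
    ext
    · rw [Prod.fst_exp, Complex.exp_eq_exp_ℂ]
    · rw [Prod.snd_exp, Complex.exp_eq_exp_ℂ]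
  rw [h2]
  show ((Complex.exp c + Complex.exp (-c)) / 2) • (1 : Matrix n n ℂ)
      + ((Complex.exp c - Complex.exp (-c)) / 2) • P = _
  rw [Complex.cosh, Complex.sinh]

end PSTAux


open Matrix

noncomputable section PSTAux2

abbrev G3 := Fin 3 → ZMod 2

def transP (y : G3) : Matrix G3 G3 ℂ :=
  Matrix.of fun u v => if u + v = y then 1 else 0

lemma transP_mul (y z : G3) : transP y * transP z = transP (y + z) := by
  have hiff : ∀ u w y : G3, u + w = y ↔ w = u + y := by decide
  have h2 : ∀ u v y z : G3, u + y + v = z ↔ u + v = y + z := by decide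
  ext u v
  rw [Matrix.mul_apply]
  simp only [transP, of_apply]
  calc (∑ w : G3, (if u + w = y then (1:ℂ) else 0) * (if w + v = z then 1 else 0))
      = ∑ w : G3, (if w = u + y then (if w + v = z then (1:ℂ) else 0) else 0) := by
        refine Finset.sum_congr rfl fun w _ => ?_
        by_cases h : w = u + y
        · have huy : u + (u + y) = y := (hiff u (u+y) y).2 rfl
          simp [h, huy]
        · have : ¬ (u + w = y) := fun hc => h ((hiff u w y).1 hc)
          simp [h, this]
    _ = (if u + y + v = z then (1:ℂ) else 0) := by
        rw [Finset.sum_ite_eq' Finset.univ (u + y) (fun w => if w + v = z then (1:ℂ) else 0)]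
        simp
    _ = (if u + v = y + z then (1:ℂ) else 0) := by
        by_cases h : u + v = y + z
        · simp [h, (h2 u v y z).2 h]
        · have : ¬ (u + y + v = z) := fun hc => h ((h2 u v y z).1 hc)
          simp [h, this]

lemma transP_zero : transP 0 = 1 := by
  have h : ∀ u v : G3, u + v = 0 ↔ u = v := by decide
  ext u v
  simp only [transP, of_apply, Matrix.one_apply, h u v]

lemma transP_sq (y : G3) : transP y * transP y = 1 := by
  rw [transP_mul, show y + y = 0 from by revert y; decide, transP_zero]

end PSTAux2
theorem weighted_cubelike_pst_example1
    (f : (Fin 3 → ZMod 2) → ℤ)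
    (hf1 : f ![0,0,1] = 4) (hf2 : f ![0,1,1] = 8) (hf3 : f ![1,0,1] = 3)
    (hf0 : ∀ y, y ≠ ![0,0,1] → y ≠ ![0,1,1] → y ≠ ![1,0,1] → f y = 0)
    (A : Matrix (Fin 3 → ZMod 2) (Fin 3 → ZMod 2) ℂ)
    (hA : ∀ u v, A u v = (f (u + v) : ℂ)) :
    ‖NormedSpace.exp ((-(Complex.I * (Real.pi / 2))) • A)
      ![1,0,1] ![0,0,0]‖ = 1 := by
  set s : ℂ := -(Complex.I * (Real.pi / 2)) with hs
  set y1 : G3 := ![0,0,1] with hy1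
  set y2 : G3 := ![0,1,1] with hy2
  set y3 : G3 := ![1,0,1] with hy3
  -- decomposition of A
  have hAdec : A = (4:ℂ) • transP y1 + ((8:ℂ) • transP y2 + (3:ℂ) • transP y3) := by
    ext u v
    rw [hA]
    simp only [Matrix.add_apply, Matrix.smul_apply, transP, of_apply, smul_eq_mul]
    by_cases h1 : u + v = y1
    · rw [h1, hf1]
      norm_num [show ¬(y1 = y2) from by decide, show ¬(y1 = y3) from by decide]
    · by_cases h2 : u + v = y2
      · rw [h2, hf2]
        norm_num [show ¬(y2 = y1) from by decide, show ¬(y2 = y3) from by decide]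
      · by_cases h3 : u + v = y3
        · rw [h3, hf3]
          norm_num [show ¬(y3 = y1) from by decide, show ¬(y3 = y2) from by decide]
        · rw [hf0 _ h1 h2 h3]
          simp [h1, h2, h3]
  have hsmul : s • A = (s * 4) • transP y1 + ((s * 8) • transP y2 + (s * 3) • transP y3) := by
    rw [hAdec]
    simp only [smul_add, smul_smul]
  -- commutation
  have hcomm : ∀ a b : G3, Commute (transP a) (transP b) := fun a b => by
    unfold Commute SemiconjBy
    rw [transP_mul, transP_mul, add_comm]
  -- scalar values
  have hpi : (s * 4) = ((-(2 * Real.pi) : ℝ) : ℂ) * Complex.I := by push_cast; rw [hs]; ring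
  have hpi8 : (s * 8) = ((-(4 * Real.pi) : ℝ) : ℂ) * Complex.I := by push_cast; rw [hs]; ring
  have hpi3 : (s * 3) = ((-(3 * Real.pi / 2) : ℝ) : ℂ) * Complex.I := by push_cast; rw [hs]; ring
  have hcos4pi : Real.cos (4 * Real.pi) = 1 := by
    have := Real.cos_nat_mul_two_pi 2
    push_cast at this
    rw [show (4:ℝ) * Real.pi = 2 * (2 * Real.pi) by ring]
    exact this
  have hsin4pi : Real.sin (4 * Real.pi) = 0 := by
    have := Real.sin_nat_mul_pi 4
    push_cast at this
    exact this
  have hcos32 : Real.cos (3 * Real.pi / 2) = 0 := by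
    rw [show 3 * Real.pi / 2 = Real.pi + Real.pi / 2 by ring, Real.cos_add]
    simp
  have hsin32 : Real.sin (3 * Real.pi / 2) = -1 := by
    rw [show 3 * Real.pi / 2 = Real.pi + Real.pi / 2 by ring, Real.sin_add]
    simp
  have hc1 : Complex.cosh (s * 4) = 1 := by
    rw [hpi, Complex.cosh_mul_I, ← Complex.ofReal_cos]
    norm_num [Real.cos_two_pi]
  have hs1 : Complex.sinh (s * 4) = 0 := by
    rw [hpi, Complex.sinh_mul_I, ← Complex.ofReal_sin]
    norm_num [Real.sin_two_pi]
  have hc2 : Complex.cosh (s * 8) = 1 := by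
    rw [hpi8, Complex.cosh_mul_I, ← Complex.ofReal_cos]
    norm_num [hcos4pi]
  have hs2 : Complex.sinh (s * 8) = 0 := by
    rw [hpi8, Complex.sinh_mul_I, ← Complex.ofReal_sin]
    norm_num [hsin4pi]
  have hc3 : Complex.cosh (s * 3) = 0 := by
    rw [hpi3, Complex.cosh_mul_I, ← Complex.ofReal_cos]
    norm_num [hcos32]
  have hs3 : Complex.sinh (s * 3) = Complex.I := by
    rw [hpi3, Complex.sinh_mul_I, ← Complex.ofReal_sin]
    norm_num [hsin32]
  -- exponentials of the pieces
  have e1 : NormedSpace.exp ((s * 4) • transP y1) = 1 := by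
    rw [exp_smul_involution _ (transP_sq y1), hc1, hs1]
    simp
  have e2 : NormedSpace.exp ((s * 8) • transP y2) = 1 := by
    rw [exp_smul_involution _ (transP_sq y2), hc2, hs2]
    simp
  have e3 : NormedSpace.exp ((s * 3) • transP y3) = Complex.I • transP y3 := by
    rw [exp_smul_involution _ (transP_sq y3), hc3, hs3]
    simp
  have hcomm23 : Commute ((s * 8) • transP y2) ((s * 3) • transP y3) :=
    ((hcomm y2 y3).smul_left _).smul_right _
  have hcomm123 : Commute ((s * 4) • transP y1) ((s * 8) • transP y2 + (s * 3) • transP y3) :=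
    (((hcomm y1 y2).smul_left _).smul_right _).add_right (((hcomm y1 y3).smul_left _).smul_right _)
  have hexp : NormedSpace.exp (s • A) = Complex.I • transP y3 := by
    rw [hsmul, Matrix.exp_add_of_commute _ _ hcomm123, Matrix.exp_add_of_commute _ _ hcomm23,
      e1, e2, e3, one_mul, one_mul]
  rw [hexp]
  have : (Complex.I • transP y3) y3 ![0,0,0] = Complex.I := by
    simp only [Matrix.smul_apply, transP, of_apply, smul_eq_mul]
    rw [if_pos (by decide), mul_one]
  rw [this]
  simp
end

section
/- Let f : ℤ₂³ → ℤ be the weight function with f(010) = 4, f(011) = 7, f(100) = 8, f(101) = 2, f(110) = 5, and f(y) = 0 for all other y, and let A u v = f(u + v) be the adjacency matrix of the weighted cubelike graph Cay(ℤ₂³, f). Then perfect state transfer occurs at time π/2 between vertices 000 and 101: the (101, 000) entry of exp(-(i π/2)·A) has absolute value 1. -/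
open Matrix

abbrev Gc := Fin 3 → ZMod 2
def sgnz (x : ZMod 2) : ℤ := if x = 0 then 1 else -1
def dotz (s y : Gc) : ZMod 2 := s 0 * y 0 + s 1 * y 1 + s 2 * y 2
def Hz : Matrix Gc Gc ℤ := fun s y => sgnz (dotz s y)
def fz : Gc → ℤ := fun y =>
  if y = ![0,1,0] then 4 else if y = ![0,1,1] then 7 else if y = ![1,0,0] then 8
  else if y = ![1,0,1] then 2 else if y = ![1,1,0] then 5 else 0
def Az : Matrix Gc Gc ℤ := fun u v => fz (u + v)
def lamz : Gc → ℤ := fun s =>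
  4 * sgnz (dotz s ![0,1,0]) + 7 * sgnz (dotz s ![0,1,1]) + 8 * sgnz (dotz s ![1,0,0])
  + 2 * sgnz (dotz s ![1,0,1]) + 5 * sgnz (dotz s ![1,1,0])
def dzv : Gc → ℤ := fun s => if lamz s % 4 = 0 then 1 else -1

noncomputable def Hc : Matrix Gc Gc ℂ := Hz.map (Int.castRingHom ℂ)

lemma hHH : Hc * Hc = (8:ℂ) • 1 := by
  have h : Hz * Hz = (8:ℤ) • 1 := by decide
  calc Hc * Hc = (Hz * Hz).map (Int.castRingHom ℂ) := (Matrix.map_mul).symm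
    _ = ((8:ℤ) • (1 : Matrix Gc Gc ℤ)).map (Int.castRingHom ℂ) := by rw [h]
    _ = (8:ℂ) • 1 := by
        ext u v
        rw [Matrix.map_apply, Matrix.smul_apply, Matrix.smul_apply,
          Matrix.one_apply, Matrix.one_apply]
        by_cases huv : u = v <;> simp [huv]

lemma hUnit : Hc * ((8:ℂ)⁻¹ • Hc) = 1 ∧ ((8:ℂ)⁻¹ • Hc) * Hc = 1 := by
  constructor
  · rw [mul_smul_comm, hHH, smul_smul]; norm_num
  · rw [smul_mul_assoc, hHH, smul_smul]; norm_num

noncomputable def Uu : (Matrix Gc Gc ℂ)ˣ := ⟨Hc, (8:ℂ)⁻¹ • Hc, hUnit.1, hUnit.2⟩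

lemma hAH : Az.map (Int.castRingHom ℂ) * Hc
    = Hc * Matrix.diagonal (fun s => (lamz s : ℂ)) := by
  have h : Az * Hz = Hz * Matrix.diagonal lamz := by decide
  calc Az.map (Int.castRingHom ℂ) * Hc = (Az * Hz).map (Int.castRingHom ℂ) :=
        (Matrix.map_mul).symm
    _ = (Hz * Matrix.diagonal lamz).map (Int.castRingHom ℂ) := by rw [h]
    _ = Hc * (Matrix.diagonal lamz).map (Int.castRingHom ℂ) := Matrix.map_mul
    _ = _ := by rw [Matrix.diagonal_map (map_zero _)]; rfl

lemma expval (n : ℤ) (h : n % 4 = 0 ∨ n % 4 = 2) :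
    Complex.exp (-(Complex.I * (Real.pi / 2)) * (n : ℂ)) =
      if n % 4 = 0 then 1 else -1 := by
  set r := n % 4 with hr
  obtain ⟨q, hq⟩ : ∃ q : ℤ, n = 4 * q + r := ⟨n / 4, by omega⟩
  have key : -(Complex.I * (Real.pi / 2)) * (n : ℂ)
      = (-q : ℤ) * (2 * Real.pi * Complex.I)
        + -(Complex.I * (Real.pi / 2)) * (r : ℂ) := by
    rw [hq]; push_cast; ring
  rw [key, Complex.exp_add, Complex.exp_int_mul_two_pi_mul_I, one_mul]
  rcases h with h | h
  · rw [h]; simp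
  · have h2 : -(Complex.I * (Real.pi / 2)) * ((2:ℤ) : ℂ) = -(Real.pi * Complex.I) := by
      push_cast; ring
    rw [h]; rw [h2, Complex.exp_neg, Complex.exp_pi_mul_I]
    norm_num

lemma hExpDiag : NormedSpace.exp
      ((-(Complex.I * (Real.pi / 2))) • Matrix.diagonal (fun s => (lamz s : ℂ)))
    = Matrix.diagonal (fun s => (dzv s : ℂ)) := by
  have hmod : ∀ s : Gc, lamz s % 4 = 0 ∨ lamz s % 4 = 2 := by decide
  have harg : NormedSpace.exp
      ((-(Complex.I * (Real.pi / 2))) • fun s : Gc => ((lamz s : ℂ)))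
      = fun s : Gc => ((dzv s : ℂ)) := by
    rw [Pi.exp_def]
    funext s
    rw [← Complex.exp_eq_exp_ℂ]
    show Complex.exp (-(Complex.I * (Real.pi / 2)) * (lamz s : ℂ)) = _
    rw [expval _ (hmod s)]
    simp [dzv, apply_ite (Int.cast : ℤ → ℂ)]
  rw [← Matrix.diagonal_smul, Matrix.exp_diagonal, harg]

theorem weighted_cubelike_pst_example2
    (f : (Fin 3 → ZMod 2) → ℤ)
    (hf1 : f ![0,1,0] = 4) (hf2 : f ![0,1,1] = 7) (hf3 : f ![1,0,0] = 8)
    (hf4 : f ![1,0,1] = 2) (hf5 : f ![1,1,0] = 5)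
    (hf0 : ∀ y, y ≠ ![0,1,0] → y ≠ ![0,1,1] → y ≠ ![1,0,0] → y ≠ ![1,0,1] →
      y ≠ ![1,1,0] → f y = 0)
    (A : Matrix (Fin 3 → ZMod 2) (Fin 3 → ZMod 2) ℂ)
    (hA : ∀ u v, A u v = (f (u + v) : ℂ)) :
    ‖(NormedSpace.exp ((-(Complex.I * (Real.pi / 2))) • A)
      ![1,0,1] ![0,0,0])‖ = 1 := by
  have hfeq : ∀ y, f y = fz y := by
    intro y
    by_cases h1 : y = ![0,1,0]
    · subst h1; rw [hf1]; decide
    by_cases h2 : y = ![0,1,1]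
    · subst h2; rw [hf2]; decide
    by_cases h3 : y = ![1,0,0]
    · subst h3; rw [hf3]; decide
    by_cases h4 : y = ![1,0,1]
    · subst h4; rw [hf4]; decide
    by_cases h5 : y = ![1,1,0]
    · subst h5; rw [hf5]; decide
    rw [hf0 y h1 h2 h3 h4 h5]
    simp [fz, h1, h2, h3, h4, h5]
  have hA' : A = Az.map (Int.castRingHom ℂ) := by
    ext u v
    rw [hA u v, hfeq]
    rfl
  set z : ℂ := -(Complex.I * (Real.pi / 2)) with hz
  set Dc : Matrix Gc Gc ℂ := Matrix.diagonal (fun s => (lamz s : ℂ)) with hDc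
  have hconj : z • A = (Uu : Matrix Gc Gc ℂ) * (z • Dc) * (↑Uu⁻¹ : Matrix Gc Gc ℂ) := by
    have hAc : A = (Uu : Matrix Gc Gc ℂ) * Dc * (↑Uu⁻¹ : Matrix Gc Gc ℂ) := by
      show A = Hc * Dc * ((8:ℂ)⁻¹ • Hc)
      rw [hA']
      calc Az.map (Int.castRingHom ℂ)
          = Az.map (Int.castRingHom ℂ) * (Hc * ((8:ℂ)⁻¹ • Hc)) := by
            rw [hUnit.1, mul_one]
        _ = (Az.map (Int.castRingHom ℂ) * Hc) * ((8:ℂ)⁻¹ • Hc) := by rw [mul_assoc]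
        _ = Hc * Dc * ((8:ℂ)⁻¹ • Hc) := by rw [hAH]
    rw [hAc, mul_smul_comm, smul_mul_assoc]
  rw [hconj, Matrix.exp_units_conj Uu, hExpDiag]
  have hinv : (↑Uu⁻¹ : Matrix Gc Gc ℂ) = (8:ℂ)⁻¹ • Hc := rfl
  have hcoe : (↑Uu : Matrix Gc Gc ℂ) = Hc := rfl
  rw [hinv, hcoe, Matrix.mul_smul]
  have hent : (Hc * Matrix.diagonal (fun s => (dzv s : ℂ)) * Hc) ![1,0,1] ![0,0,0]
      = (-8 : ℂ) := by
    have h : (Hz * Matrix.diagonal dzv * Hz) ![1,0,1] ![0,0,0] = -8 := by decide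
    have hm : Hc * Matrix.diagonal (fun s => (dzv s : ℂ)) * Hc
        = (Hz * Matrix.diagonal dzv * Hz).map (Int.castRingHom ℂ) := by
      rw [Matrix.map_mul, Matrix.map_mul, Matrix.diagonal_map (map_zero _)]; rfl
    rw [hm, Matrix.map_apply, h]
    norm_num
  rw [Matrix.smul_apply, hent]
  norm_num
end
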